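/- If ω(n) denotes the minimum cardinality of a weakly 3-suitable family of permutations of [n], and α(n) the minimum cardinality of a 3-suitable family of permutations of [n], then α(n) ≤ 2·ω(n). -/

import Mathlib

/-- A family of strict orders is *3-suitable* if for every three distinct elements
`a b c` and distinguished element `a`, some order places `a` after both `b` and `c`. -/
def Fam3Suitable {X ι : Type*} (S : ι → X → X → Prop) : Prop :=
  ∀ a b c : X, a ≠ b → a ≠ c → b ≠ c → ∃ i, S i b a ∧ S i c a

/-- A family of strict orders is *weakly 3-suitable* if for every three distinct elements
`a b c` and distinguished element `a`, some order places `a` after both `b` and `c`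
or before both `b` and `c`. -/
def FamWeakly3Suitable {X ι : Type*} (S : ι → X → X → Prop) : Prop :=
  ∀ a b c : X, a ≠ b → a ≠ c → b ≠ c →
    ∃ i, (S i b a ∧ S i c a) ∨ (S i a b ∧ S i a c)

/-- Minimum cardinality of a weakly 3-suitable family of permutations of `[n]`. -/
noncomputable def permOmega (n : ℕ) : ℕ :=
  sInf {k | ∃ S : Fin k → Fin n → Fin n → Prop,
    (∀ i, IsStrictTotalOrder (Fin n) (S i)) ∧ FamWeakly3Suitable S}

/-- Minimum cardinality of a 3-suitable family of permutations of `[n]`. -/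
noncomputable def permAlpha (n : ℕ) : ℕ :=
  sInf {k | ∃ S : Fin k → Fin n → Fin n → Prop,
    (∀ i, IsStrictTotalOrder (Fin n) (S i)) ∧ Fam3Suitable S}

lemma flip_isSTO {X : Type*} (r : X → X → Prop) (h : IsStrictTotalOrder X r) :
    IsStrictTotalOrder X (fun x y => r y x) :=
  { trichotomous := fun a b => by
      intro h1 h2; exact (h.trichotomous b a h1 h2).symm
    irrefl := fun a ha => h.irrefl a ha
    trans := fun a b c hab hbc => h.trans _ _ _ hbc hab }

lemma doubling {n k : ℕ} (S : Fin k → Fin n → Fin n → Prop)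
    (hSTO : ∀ i, IsStrictTotalOrder (Fin n) (S i)) (hW : FamWeakly3Suitable S) :
    ∃ T : Fin (2 * k) → Fin n → Fin n → Prop,
      (∀ i, IsStrictTotalOrder (Fin n) (T i)) ∧ Fam3Suitable T := by
  refine ⟨fun j x y =>
    if h : (j : ℕ) < k then S ⟨j, h⟩ x y else S ⟨(j : ℕ) - k, by omega⟩ y x, ?_, ?_⟩
  · intro j
    by_cases h : (j : ℕ) < k
    · simpa [h] using hSTO ⟨j, h⟩
    · simpa [h] using flip_isSTO _ (hSTO ⟨(j : ℕ) - k, by omega⟩)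
  · intro a b c hab hac hbc
    obtain ⟨i, hi | hi⟩ := hW a b c hab hac hbc
    · refine ⟨⟨i, by omega⟩, ?_⟩
      simpa [i.isLt] using hi
    · refine ⟨⟨k + i, by omega⟩, ?_⟩
      have hlt : ¬ (k + (i : ℕ) < k) := by omega
      simpa [hlt] using hi

theorem permAlpha_le_two_mul_permOmega (n : ℕ) :
    permAlpha n ≤ 2 * permOmega n := by
  have hne : permOmega n ∈ {k | ∃ S : Fin k → Fin n → Fin n → Prop,
      (∀ i, IsStrictTotalOrder (Fin n) (S i)) ∧ FamWeakly3Suitable S} := by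
    apply Nat.sInf_mem
    refine ⟨n, fun j x y =>
      (if x = j then n else (x : ℕ)) < (if y = j then n else (y : ℕ)), ?_, ?_⟩
    · intro j
      refine { trichotomous := ?_, irrefl := ?_, trans := ?_ }
      · intro x y
        rcases lt_trichotomy (if x = j then n else (x : ℕ)) (if y = j then n else (y : ℕ))
          with h | h | h
        · intro h1; exact absurd h h1
        · intro _ _
          by_cases hx : x = j <;> by_cases hy : y = j <;>
            simp [hx, hy] at h ⊢ <;>
            first
              | rfl
              | (exact absurd h.symm (Nat.ne_of_lt y.isLt))
              | (exact absurd h (Nat.ne_of_lt x.isLt))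
              | (exact Fin.ext h)
        · intro _ h2; exact absurd h h2
      · intro x hx; exact lt_irrefl _ hx
      · intro x y z; exact Nat.lt_trans
    · intro a b c hab hac hbc
      refine ⟨a, Or.inl ⟨?_, ?_⟩⟩
      · simp [Ne.symm hab, b.isLt]
      · simp [Ne.symm hac, c.isLt]
  obtain ⟨S, hSTO, hW⟩ := hne
  obtain ⟨T, hT1, hT2⟩ := doubling S hSTO hW
  exact Nat.sInf_le ⟨T, hT1, hT2⟩
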